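/- arXiv:2208.04055 — 2 statements merged into one kernel-verified Lean document; each statement's English description precedes it below -/
import Mathlib

section
/- With the setup of a scalar set function extension (p_x a probability distribution on subsets with ∑_S p_x(S)·1_S = x), any minimizer x of f̄ over [0,1]^n lies in the convex hull of the set {1_S : S ∈ argmin_{T ⊆ [n]} f(T)}. -/
/-- Any minimizer of a scalar SFE `f̄` over the cube lies in the convex
hull of the indicator vectors of the sets minimizing `f`. -/
theorem scalar_sfe_argmin_in_hull (n : ℕ) (f : Finset (Fin n) → ℝ)
    (p : (Fin n → ℝ) → Finset (Fin n) → ℝ)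
    (hnonneg : ∀ x : Fin n → ℝ, (∀ i, x i ∈ Set.Icc (0:ℝ) 1) →
      ∀ S : Finset (Fin n), 0 ≤ p x S)
    (hsum : ∀ x : Fin n → ℝ, (∀ i, x i ∈ Set.Icc (0:ℝ) 1) →
      ∑ S : Finset (Fin n), p x S = 1)
    (hfeas : ∀ x : Fin n → ℝ, (∀ i, x i ∈ Set.Icc (0:ℝ) 1) →
      ∀ i : Fin n, ∑ S : Finset (Fin n), p x S * (if i ∈ S then (1:ℝ) else 0) = x i)
    (x : Fin n → ℝ) (hx : ∀ i, x i ∈ Set.Icc (0:ℝ) 1)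
    (hmin : ∀ y : Fin n → ℝ, (∀ i, y i ∈ Set.Icc (0:ℝ) 1) →
      ∑ S : Finset (Fin n), p x S * f S ≤ ∑ S : Finset (Fin n), p y S * f S) :
    x ∈ convexHull ℝ {v : Fin n → ℝ |
      ∃ S : Finset (Fin n), (∀ T : Finset (Fin n), f S ≤ f T) ∧
        v = fun i => if i ∈ S then (1:ℝ) else 0} := by
  classical
  -- a minimizer S₀ of f
  obtain ⟨S₀, -, hS₀⟩ := Finset.exists_min_image (Finset.univ : Finset (Finset (Fin n))) f
    ⟨∅, Finset.mem_univ _⟩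
  have hS₀min : ∀ T, f S₀ ≤ f T := fun T => hS₀ T (Finset.mem_univ _)
  set y : Fin n → ℝ := fun i => if i ∈ S₀ then (1:ℝ) else 0 with hy_def
  have hy : ∀ i, y i ∈ Set.Icc (0:ℝ) 1 := by
    intro i; simp only [hy_def]; split <;> constructor <;> norm_num
  -- support of p y is {S₀}
  have hsupp : ∀ S : Finset (Fin n), S ≠ S₀ → p y S = 0 := by
    intro S hS
    have : ∃ i, (i ∈ S) ≠ (i ∈ S₀) := by
      by_contra h
      push_neg at h
      exact hS (Finset.ext fun i => by rw [h i])
    obtain ⟨i, hi⟩ := this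
    by_cases hiS : i ∈ S
    · have hiS₀ : i ∉ S₀ := by
        intro h; exact hi (by simp [hiS, h])
      have h0 : ∑ T : Finset (Fin n), p y T * (if i ∈ T then (1:ℝ) else 0) = 0 := by
        rw [hfeas y hy i]; simp [hy_def, hiS₀]
      have := (Finset.sum_eq_zero_iff_of_nonneg (fun T _ => by
        have := hnonneg y hy T
        positivity)).mp h0 S (Finset.mem_univ _)
      simpa [hiS] using this
    · have hiS₀ : i ∈ S₀ := by
        by_contra h; exact hi (by simp [hiS, h])
      have h1 : ∑ T : Finset (Fin n), p y T * (if i ∈ T then (1:ℝ) else 0) = 1 := by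
        rw [hfeas y hy i]; simp [hy_def, hiS₀]
      have h0 : ∑ T : Finset (Fin n), p y T * (if i ∈ T then (0:ℝ) else 1) = 0 := by
        have : ∀ T : Finset (Fin n), p y T * (if i ∈ T then (0:ℝ) else 1)
            = p y T - p y T * (if i ∈ T then (1:ℝ) else 0) := by
          intro T; split <;> ring
        rw [Finset.sum_congr rfl (fun T _ => this T), Finset.sum_sub_distrib,
          hsum y hy, h1]; ring
      have := (Finset.sum_eq_zero_iff_of_nonneg (fun T _ => by
        have := hnonneg y hy T
        positivity)).mp h0 S (Finset.mem_univ _)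
      simpa [hiS] using this
    -- value at y equals f S₀
  have hval : ∑ S : Finset (Fin n), p y S * f S = f S₀ := by
    have : ∀ S : Finset (Fin n), p y S * f S = p y S * f S₀ := by
      intro S
      by_cases h : S = S₀
      · rw [h]
      · rw [hsupp S h]; ring
    rw [Finset.sum_congr rfl (fun S _ => this S), ← Finset.sum_mul, hsum y hy, one_mul]
  -- f̄(x) ≤ min f
  have hxle : ∑ S : Finset (Fin n), p x S * f S ≤ f S₀ := hval ▸ hmin y hy
  -- every S in the support of p x minimizes f
  have hmin' : ∀ S : Finset (Fin n), p x S ≠ 0 → f S = f S₀ := by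
    have hterm : ∀ T ∈ (Finset.univ : Finset (Finset (Fin n))),
        0 ≤ p x T * (f T - f S₀) := fun T _ =>
      mul_nonneg (hnonneg x hx T) (sub_nonneg.mpr (hS₀min T))
    have h0 : ∑ T : Finset (Fin n), p x T * (f T - f S₀) = 0 := by
      have expand : ∑ T : Finset (Fin n), p x T * (f T - f S₀)
          = (∑ T : Finset (Fin n), p x T * f T) - f S₀ := by
        have : ∀ T : Finset (Fin n), p x T * (f T - f S₀)
            = p x T * f T - p x T * f S₀ := fun T => by ring
        rw [Finset.sum_congr rfl (fun T _ => this T), Finset.sum_sub_distrib,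
          ← Finset.sum_mul, hsum x hx, one_mul]
      have hle : ∑ T : Finset (Fin n), p x T * (f T - f S₀) ≤ 0 := by
        rw [expand]; linarith
      exact le_antisymm hle (Finset.sum_nonneg hterm)
    intro S hS
    have := (Finset.sum_eq_zero_iff_of_nonneg hterm).mp h0 S (Finset.mem_univ _)
    rcases mul_eq_zero.mp this with h | h
    · exact absurd h hS
    · linarith [sub_eq_zero.mp h]
  -- x is a convex combination of indicators of minimizers
  set t : Finset (Finset (Fin n)) := Finset.univ.filter (fun S => p x S ≠ 0) with ht
  have hw1 : ∑ S ∈ t, p x S = 1 := by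
    rw [ht, Finset.sum_filter_ne_zero, hsum x hx]
  have hmem : ∀ S ∈ t, (fun i => if i ∈ S then (1:ℝ) else 0) ∈
      {v : Fin n → ℝ | ∃ S : Finset (Fin n), (∀ T : Finset (Fin n), f S ≤ f T) ∧
        v = fun i => if i ∈ S then (1:ℝ) else 0} := by
    intro S hS
    have hS' : p x S ≠ 0 := (Finset.mem_filter.mp hS).2
    exact ⟨S, fun T => (hmin' S hS').symm ▸ hS₀min T, rfl⟩
  have hcomb : x = ∑ S ∈ t, p x S • (fun i => if i ∈ S then (1:ℝ) else 0) := by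
    funext i
    rw [Finset.sum_apply]
    have : ∑ S ∈ t, (p x S • fun i => if i ∈ S then (1:ℝ) else 0) i
        = ∑ S ∈ t, p x S * (if i ∈ S then (1:ℝ) else 0) := by
      apply Finset.sum_congr rfl; intro S _; simp [smul_eq_mul]
    rw [this]
    rw [ht, Finset.sum_filter_of_ne (by intro S _ h hS; exact h (by rw [hS]; ring))]
    exact (hfeas x hx i).symm
  rw [hcomb]
  exact Convex.sum_mem (convex_convexHull ℝ _) (fun S _ => hnonneg x hx S) hw1
    (fun S hS => subset_convexHull ℝ _ (hmem S hS))
end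

section
/- Define the singleton extension of a function g : [n] → ℝ with g(i) < 0 for a unique minimizer and min_i g(i) < 0 by f̄(x) = ∑_{i=1}^n (x_i − x_{i+1}) g(i) for sorted x ∈ [0,1]^n (x_1 ≥ … ≥ x_n, x_{n+1} = 0, coordinates relabeled so g respects the sort). Then f̄(x) ≥ min_i g(i) for all x ∈ [0,1]^n, with equality attained at x = e_1 (after relabeling so the minimizer is first); moreover any minimizer x of f̄ equals the indicator of the unique minimizing singleton. -/
/-- No-bad-minima property of the singleton extension. With coordinates
relabeled so the unique (negative) minimizer of `g` comes first, the singleton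
extension `F x = ∑ i, (x i - x (i+1)) g i` (with `x (n+1) = 0`) of `g` over sorted
points of the cube satisfies `F x ≥ g 0`, with equality at `x = e₁`, and any sorted
minimizer in the cube equals `e₁`. -/
theorem singleton_extension_no_bad_minima (n : ℕ) (g : Fin (n + 1) → ℝ)
    (hneg : g 0 < 0) (hmin : ∀ j : Fin (n + 1), j ≠ 0 → g 0 < g j)
    (F : (Fin (n + 1) → ℝ) → ℝ)
    (hF : ∀ x : Fin (n + 1) → ℝ, F x = ∑ i : Fin (n + 1),
      (x i - (if h : (i : ℕ) + 1 < n + 1 then x ⟨(i : ℕ) + 1, h⟩ else 0)) * g i) :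
    (∀ x : Fin (n + 1) → ℝ, (∀ i, x i ∈ Set.Icc (0:ℝ) 1) →
      (∀ i j : Fin (n + 1), i ≤ j → x j ≤ x i) → g 0 ≤ F x) ∧
    F (Pi.single 0 1) = g 0 ∧
    (∀ x : Fin (n + 1) → ℝ, (∀ i, x i ∈ Set.Icc (0:ℝ) 1) →
      (∀ i j : Fin (n + 1), i ≤ j → x j ≤ x i) → F x = g 0 →
      x = Pi.single 0 1) := by
  set c : (Fin (n + 1) → ℝ) → Fin (n + 1) → ℝ :=
    fun x i => x i - (if h : (i : ℕ) + 1 < n + 1 then x ⟨(i : ℕ) + 1, h⟩ else 0) with hc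
  -- telescoping
  have tele : ∀ x : Fin (n + 1) → ℝ, ∑ i : Fin (n + 1), c x i = x 0 := by
    intro x
    set y : ℕ → ℝ := fun k => if h : k < n + 1 then x ⟨k, h⟩ else 0 with hy
    have h1 : ∀ i : Fin (n + 1), c x i = y (i : ℕ) - y ((i : ℕ) + 1) := by
      intro i
      simp only [hc, hy, i.isLt, dif_pos, Fin.eta]
    rw [Finset.sum_congr rfl (fun i _ => h1 i),
      Fin.sum_univ_eq_sum_range (fun k => y k - y (k + 1)) (n + 1),
      Finset.sum_range_sub' y (n + 1)]
    simp [hy]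
  have key : ∀ x : Fin (n + 1) → ℝ,
      F x = x 0 * g 0 + ∑ i : Fin (n + 1), c x i * (g i - g 0) := by
    intro x
    rw [hF x]
    have : ∀ i ∈ Finset.univ, (x i - (if h : (i : ℕ) + 1 < n + 1 then x ⟨(i : ℕ) + 1, h⟩ else 0)) * g i
        = c x i * (g i - g 0) + c x i * g 0 := fun i _ => by simp [hc]; ring
    rw [Finset.sum_congr rfl this, Finset.sum_add_distrib, ← Finset.sum_mul, tele]
    ring
  have cnonneg : ∀ x : Fin (n + 1) → ℝ, (∀ i, x i ∈ Set.Icc (0:ℝ) 1) →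
      (∀ i j : Fin (n + 1), i ≤ j → x j ≤ x i) → ∀ i, 0 ≤ c x i := by
    intro x hx hs i
    simp only [hc]
    by_cases h : (i : ℕ) + 1 < n + 1
    · rw [dif_pos h, sub_nonneg]
      exact hs i ⟨(i : ℕ) + 1, h⟩ (by simp [Fin.le_def])
    · rw [dif_neg h, sub_zero]
      exact (hx i).1
  have gnonneg : ∀ i : Fin (n + 1), 0 ≤ g i - g 0 := by
    intro i
    by_cases h : i = 0
    · simp [h]
    · linarith [hmin i h]
  have sumnn : ∀ x : Fin (n + 1) → ℝ, (∀ i, x i ∈ Set.Icc (0:ℝ) 1) →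
      (∀ i j : Fin (n + 1), i ≤ j → x j ≤ x i) →
      0 ≤ ∑ i : Fin (n + 1), c x i * (g i - g 0) := by
    intro x hx hs
    exact Finset.sum_nonneg fun i _ => mul_nonneg (cnonneg x hx hs i) (gnonneg i)
  refine ⟨?_, ?_, ?_⟩
  · intro x hx hs
    have h1 := sumnn x hx hs
    have h2 : g 0 ≤ x 0 * g 0 := by nlinarith [(hx 0).1, (hx 0).2]
    rw [key x]; linarith
  · rw [key]
    have : ∑ i : Fin (n + 1), c (Pi.single 0 1) i * (g i - g 0) = 0 := by
      apply Finset.sum_eq_zero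
      intro i _
      by_cases h : i = 0
      · simp [h]
      · have h1 : (Pi.single 0 1 : Fin (n + 1) → ℝ) i = 0 := by rw [Pi.single_eq_of_ne h]
        have h2 : c (Pi.single 0 1) i = 0 := by
          simp only [hc, h1]
          by_cases hh : (i : ℕ) + 1 < n + 1
          · rw [dif_pos hh, Pi.single_eq_of_ne (i := (0 : Fin (n + 1))) (i' := (⟨(i : ℕ) + 1, hh⟩ : Fin (n + 1))) (fun h0 => by have h3 := congrArg Fin.val h0; rw [Fin.val_zero] at h3; simp at h3) 1]; ring
          · rw [dif_neg hh]; ring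
        rw [h2]; ring
    rw [this]
    simp
  · intro x hx hs hFx
    have h1 := sumnn x hx hs
    rw [key x] at hFx
    have hx0le : x 0 ≤ 1 := (hx 0).2
    -- g 0 = x 0 * g 0 + S, S ≥ 0, so g 0 * (1 - x 0) ≥ 0, g 0 < 0 ⇒ x 0 ≥ 1
    have hx0 : x 0 = 1 := by nlinarith
    have hS : ∑ i : Fin (n + 1), c x i * (g i - g 0) = 0 := by
      rw [hx0] at hFx; linarith
    have hterm : ∀ i : Fin (n + 1), i ≠ 0 → c x i = 0 := by
      intro i hi
      have := (Finset.sum_eq_zero_iff_of_nonneg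
        (fun i _ => mul_nonneg (cnonneg x hx hs i) (gnonneg i))).mp hS i (Finset.mem_univ i)
      have hgi : g i - g 0 ≠ 0 := by have := hmin i hi; linarith
      exact (mul_eq_zero.mp this).resolve_right hgi
    -- downward induction: x ⟨k⟩ = 0 for 1 ≤ k ≤ n
    have hzero : ∀ d k, n - k = d → 1 ≤ k → (hk : k ≤ n) → x ⟨k, by omega⟩ = 0 := by
      intro d
      induction d with
      | zero =>
        intro k hd h1 h2
        have hkn : k = n := by omega
        subst hkn
        have := hterm ⟨k, by omega⟩ (by simp [Fin.ext_iff]; omega)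
        simp only [hc] at this
        rw [dif_neg (by omega)] at this
        linarith
      | succ d ih =>
        intro k hd h1 h2
        have hk1 : k + 1 ≤ n := by omega
        have hnext := ih (k + 1) (by omega) (by omega) hk1
        have := hterm ⟨k, by omega⟩ (by simp [Fin.ext_iff]; omega)
        simp only [hc] at this
        rw [dif_pos (by omega)] at this
        rw [sub_eq_zero] at this
        rw [this]
        exact hnext
    funext j
    by_cases hj : j = 0
    · subst hj; rw [hx0]; simp
    · have hk1 : 1 ≤ (j : ℕ) := by
        rcases Nat.eq_zero_or_pos (j : ℕ) with h | h
        · exact absurd (Fin.ext h) hj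
        · exact h
      have hk2 : (j : ℕ) ≤ n := by omega
      have := hzero (n - j) j rfl hk1 hk2
      simp only [Fin.eta] at this
      rw [this, Pi.single_eq_of_ne hj]
end
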